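/- Let ε₀ > 0 and let x, ρ : [0,∞) → ℝ be differentiable functions with x(t) > 0 for all t ≥ 0, satisfying x'(t) = ρ(t) x(t)² and ρ'(t) ≤ −1/(2 x(t)) for all t ≥ 0, with x(0) ≤ ε₀ and ρ(0) ≤ 0. Then for all t ≥ 0: x is nonincreasing (so x(t) ≤ ε₀), ρ(t) ≤ −t/(2ε₀), and x(t) ≤ ε₀ / (1 + t²/4). -/

import Mathlib

open Set

/-- **The ODE core of the convergence of geodesics to the boundary at infinity.**
If `x > 0`, `x' = ρ x²`, `ρ' ≤ -1/(2x)` on `[0,∞)`, `x(0) ≤ ε₀` and `ρ(0) ≤ 0`, then `x`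
is nonincreasing, `ρ(t) ≤ -t/(2ε₀)`, and `x(t) ≤ ε₀/(1+t²/4)`. -/
theorem stmt9 (ε₀ : ℝ) (hε₀ : 0 < ε₀) (x ρ ρ' : ℝ → ℝ)
    (hxpos : ∀ t : ℝ, 0 ≤ t → 0 < x t)
    (hx' : ∀ t : ℝ, 0 ≤ t → HasDerivWithinAt x (ρ t * (x t) ^ 2) (Set.Ici 0) t)
    (hρ' : ∀ t : ℝ, 0 ≤ t → HasDerivWithinAt ρ (ρ' t) (Set.Ici 0) t)
    (hρ'le : ∀ t : ℝ, 0 ≤ t → ρ' t ≤ -(1 / (2 * x t)))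
    (hx0 : x 0 ≤ ε₀) (hρ0 : ρ 0 ≤ 0) :
    AntitoneOn x (Set.Ici 0) ∧
      ∀ t : ℝ, 0 ≤ t → x t ≤ ε₀ ∧ ρ t ≤ -(t / (2 * ε₀)) ∧ x t ≤ ε₀ / (1 + t ^ 2 / 4) := by
  have hxcont : ContinuousOn x (Ici 0) := fun t ht => (hx' t ht).continuousWithinAt
  have hρcont : ContinuousOn ρ (Ici 0) := fun t ht => (hρ' t ht).continuousWithinAt
  -- ρ is antitone
  have hρanti : AntitoneOn ρ (Ici 0) := by
    apply antitoneOn_of_deriv_nonpos (convex_Ici 0) hρcont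
    · intro t ht
      rw [interior_Ici] at ht
      exact ((hρ' t ht.le).hasDerivAt (Ici_mem_nhds ht)).differentiableAt.differentiableWithinAt
    intro t ht
    rw [interior_Ici] at ht
    have h1 := (hρ' t ht.le).hasDerivAt (Ici_mem_nhds ht)
    rw [h1.deriv]
    have hx := hxpos t ht.le
    have h2 : 0 < 1 / (2 * x t) := by positivity
    linarith [hρ'le t ht.le]
  have hρneg : ∀ t : ℝ, 0 ≤ t → ρ t ≤ 0 :=
    fun t ht => (hρanti Set.self_mem_Ici ht ht).trans hρ0
  -- x is antitone
  have hxanti : AntitoneOn x (Ici 0) := by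
    apply antitoneOn_of_deriv_nonpos (convex_Ici 0) hxcont
    · intro t ht
      rw [interior_Ici] at ht
      exact ((hx' t ht.le).hasDerivAt (Ici_mem_nhds ht)).differentiableAt.differentiableWithinAt
    intro t ht
    rw [interior_Ici] at ht
    have h1 := (hx' t ht.le).hasDerivAt (Ici_mem_nhds ht)
    rw [h1.deriv]
    nlinarith [hρneg t ht.le, sq_nonneg (x t)]
  have hxle : ∀ t : ℝ, 0 ≤ t → x t ≤ ε₀ :=
    fun t ht => (hxanti Set.self_mem_Ici ht ht).trans hx0
  -- ρ t ≤ -(t/(2 ε₀))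
  have hρbound : ∀ t : ℝ, 0 ≤ t → ρ t ≤ -(t / (2 * ε₀)) := by
    have hganti : AntitoneOn (fun t => ρ t + t / (2 * ε₀)) (Ici 0) := by
      apply antitoneOn_of_deriv_nonpos (convex_Ici 0)
      · exact hρcont.add ((continuous_id.div_const _).continuousOn)
      · intro t ht
        rw [interior_Ici] at ht
        exact (((hρ' t ht.le).hasDerivAt (Ici_mem_nhds ht)).add
          ((hasDerivAt_id t).div_const (2 * ε₀))).differentiableAt.differentiableWithinAt
      intro t ht
      rw [interior_Ici] at ht
      have h1 : HasDerivAt (fun t => ρ t + t / (2 * ε₀)) (ρ' t + 1 / (2 * ε₀)) t :=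
        ((hρ' t ht.le).hasDerivAt (Ici_mem_nhds ht)).add
          ((hasDerivAt_id t).div_const (2 * ε₀))
      rw [h1.deriv]
      have hx := hxpos t ht.le
      have hle : 1 / (2 * ε₀) ≤ 1 / (2 * x t) := by
        apply one_div_le_one_div_of_le (by positivity)
        linarith [hxle t ht.le]
      linarith [hρ'le t ht.le]
    intro t ht
    have := hganti Set.self_mem_Ici ht ht
    simp only [zero_div] at this
    linarith
  -- the quantitative bound
  refine ⟨hxanti, fun t ht => ⟨hxle t ht, hρbound t ht, ?_⟩⟩
  have hmono : MonotoneOn (fun t => (x t)⁻¹ - t ^ 2 / (4 * ε₀)) (Ici 0) := by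
    apply monotoneOn_of_deriv_nonneg (convex_Ici 0)
    · exact (hxcont.inv₀ (fun s hs => (hxpos s hs).ne')).sub
        ((continuous_pow 2).continuousOn.div_const _)
    · intro s hs
      rw [interior_Ici] at hs
      exact ((((hx' s hs.le).hasDerivAt (Ici_mem_nhds hs)).inv (hxpos s hs.le).ne').sub
        ((hasDerivAt_pow 2 s).div_const (4 * ε₀))).differentiableAt.differentiableWithinAt
    intro s hs
    rw [interior_Ici] at hs
    have hxs := hxpos s hs.le
    have h1 : HasDerivAt (fun t => (x t)⁻¹ - t ^ 2 / (4 * ε₀))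
        (-(ρ s * x s ^ 2) / x s ^ 2 - 2 * s ^ 1 / (4 * ε₀)) s :=
      (((hx' s hs.le).hasDerivAt (Ici_mem_nhds hs)).inv hxs.ne').sub
        ((hasDerivAt_pow 2 s).div_const (4 * ε₀))
    rw [h1.deriv]
    have h2 : -(ρ s * x s ^ 2) / x s ^ 2 = -ρ s := by
      field_simp
    rw [h2]
    have := hρbound s hs.le
    rw [pow_one]
    have hdiv : s / (2 * ε₀) = 2 * s / (4 * ε₀) := by ring
    linarith [hdiv ▸ this]
  have hkey := hmono Set.self_mem_Ici ht ht
  simp only [ne_eq, OfNat.ofNat_ne_zero, not_false_eq_true, zero_pow, zero_div, sub_zero] at hkey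
  have hx0pos := hxpos 0 le_rfl
  have hxt := hxpos t ht
  have hinv0 : ε₀⁻¹ ≤ (x 0)⁻¹ := by
    apply inv_anti₀ hx0pos hx0
  have hinv : ε₀⁻¹ + t ^ 2 / (4 * ε₀) ≤ (x t)⁻¹ := by linarith
  rw [le_div_iff₀ (by positivity)]
  have hmul : x t * (ε₀⁻¹ + t ^ 2 / (4 * ε₀)) ≤ x t * (x t)⁻¹ :=
    mul_le_mul_of_nonneg_left hinv hxt.le
  rw [mul_inv_cancel₀ hxt.ne'] at hmul
  have : x t * (1 + t ^ 2 / 4) = ε₀ * (x t * (ε₀⁻¹ + t ^ 2 / (4 * ε₀))) := by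
    field_simp
  rw [this]
  nlinarith
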